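/- Nondemolition property of the output: let A be a unital complex star-algebra, ℏ > 0, φ, β, γ, δ ∈ ℂ, u, u' ∈ ℂ, and let x, v, w ∈ A satisfy: x commutes with each of v, star v, w, star w; v commutes with w; x·(star x) − (star x)·x = ℏ·1; and w·(star v) − (star v)·w = −(conj(φ)·γ)·ℏ·1. Then the updated system element x' := φ·x + (β·u)·1 + v and the output element y := γ·x + (δ·u')·1 + w satisfy y·x' = x'·y and y·(star x') = (star x')·y, i.e. the output commutes with the present system variable and its adjoint. -/
import Mathlib


/-- Nondemolition property of the output: the output `y = γ·x + δ·u'·1 + w` commutes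
with the updated system element `x' = φ·x + β·u·1 + v` and with its adjoint, given
the choice of commutator `[w, v*] = −conj(φ)·γ·ℏ·1`. -/
theorem output_nondemolition
    {A : Type*} [Ring A] [Algebra ℂ A] [StarRing A] [StarModule ℂ A]
    (ℏ : ℝ) (hℏ : 0 < ℏ) (φ β γ δ : ℂ) (u u' : ℂ) (x v w : A)
    (hxv : x * v = v * x)
    (hxvs : x * star v = star v * x)
    (hxw : x * w = w * x)
    (hxws : x * star w = star w * x)
    (hvw : v * w = w * v)
    (hx : x * star x - star x * x = (ℏ : ℂ) • (1 : A))
    (hwv : w * star v - star v * w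
        = -(((starRingEnd ℂ) φ * γ) * (ℏ : ℂ)) • (1 : A)) :
    (γ • x + (δ * u') • (1 : A) + w) * (φ • x + (β * u) • (1 : A) + v)
      = (φ • x + (β * u) • (1 : A) + v) * (γ • x + (δ * u') • (1 : A) + w)
    ∧ (γ • x + (δ * u') • (1 : A) + w) * star (φ • x + (β * u) • (1 : A) + v)
      = star (φ • x + (β * u) • (1 : A) + v) * (γ • x + (δ * u') • (1 : A) + w) := by
  have hws : w * star x = star x * w := by
    have := congrArg star hxws
    simpa [star_mul, star_star] using this
  have hvs : x * star v = star v * x := hxvs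
  have hx' : x * star x = star x * x + (ℏ : ℂ) • (1 : A) := by
    rw [← hx]; abel
  have hwv' : w * star v
      = star v * w + (-(((starRingEnd ℂ) φ * γ) * (ℏ : ℂ))) • (1 : A) := by
    rw [← hwv]; abel
  constructor
  · simp only [add_mul, mul_add, smul_mul_assoc, mul_smul_comm, smul_smul,
      mul_one, one_mul]
    rw [hxv, hxw, hvw]
    module
  · simp only [star_add, star_smul, star_one, star_mul, add_mul, mul_add,
      smul_mul_assoc, mul_smul_comm, smul_smul, mul_one, one_mul]
    rw [hx', hvs, hws, hwv']
    simp only [smul_add, mul_add, add_mul, smul_smul, ← starRingEnd_apply]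
    module
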